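/- arXiv:1409.2319 — 2 statements merged into one kernel-verified Lean document; each statement's English description precedes it below -/
import Mathlib

section
/- Suppose R is F-pure and F-finite. Then every Φ(E)-special ideal of R is fully Φ(E)-special. -/
open TensorProduct IsLocalRing DirectSum

universe u v

/-! ### Frobenius twists and base change -/

/-- `R` viewed as an algebra over itself via the `n`-th power of the Frobenius
endomorphism; this plays the role of `R^{(n)}` (an `R`-module via `r • s = r ^ p ^ n * s`). -/
def FrobAlg (R : Type u) (p n : ℕ) [CommRing R] [Fact p.Prime] [CharP R p] : Type u := R

namespace FrobAlg

variable (R : Type u) (p n : ℕ) [CommRing R] [Fact p.Prime] [CharP R p]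

instance : CommRing (FrobAlg R p n) := inferInstanceAs (CommRing R)

instance : Algebra R (FrobAlg R p n) :=
  RingHom.toAlgebra (show R →+* FrobAlg R p n from (frobenius R p) ^ n)

/-- The canonical identification of `R` with the underlying set of `R^{(n)}`. -/
def of (r : R) : FrobAlg R p n := r

end FrobAlg

/-- The Frobenius base change `R^{(n)} ⊗_R M` of an `R`-module `M` along the `n`-th
power of the Frobenius endomorphism of `R`. -/
def FrobBC (R : Type u) (p n : ℕ) [CommRing R] [Fact p.Prime] [CharP R p]
    (M : Type v) [AddCommGroup M] [Module R M] : Type (max u v) :=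
  FrobAlg R p n ⊗[R] M

namespace FrobBC

variable (R : Type u) (p n : ℕ) [CommRing R] [Fact p.Prime] [CharP R p]
  (M : Type v) [AddCommGroup M] [Module R M]

noncomputable instance : AddCommGroup (FrobBC R p n M) :=
  inferInstanceAs (AddCommGroup (FrobAlg R p n ⊗[R] M))

/-- The `R`-module structure on `R^{(n)} ⊗_R M` given by multiplication on the first
factor. -/
noncomputable instance : Module R (FrobBC R p n M) :=
  inferInstanceAs (Module (FrobAlg R p n) (FrobAlg R p n ⊗[R] M))

variable {M}

/-- The elementary tensor `r ⊗ m` in `R^{(n)} ⊗_R M`. -/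
noncomputable def tmul (r : R) (m : M) : FrobBC R p n M := FrobAlg.of R p n r ⊗ₜ[R] m

end FrobBC

/-- `R` is `F`-pure if for every `R`-module `M` the natural map
`M → R^{(1)} ⊗_R M`, `m ↦ 1 ⊗ m`, is injective. -/
def IsFPure (R : Type u) (p : ℕ) [CommRing R] [Fact p.Prime] [CharP R p] : Prop :=
  ∀ (M : Type u) [AddCommGroup M] [Module R M],
    Function.Injective fun m : M => FrobBC.tmul R p 1 (1 : R) m

/-- An ideal `𝔞` of `R` is fully `Φ(E)`-special if for every `n ≥ 1`, every `r ∈ 𝔞` and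
every `e ∈ (0 :_E 𝔞)`, the element `r ⊗ e` is zero in `R^{(n)} ⊗_R E`. -/
def IsFullyPhiSpecial (R : Type u) (p : ℕ) [CommRing R] [Fact p.Prime] [CharP R p]
    (E : Type v) [AddCommGroup E] [Module R E] (𝔞 : Ideal R) : Prop :=
  ∀ n : ℕ, 1 ≤ n → ∀ r ∈ 𝔞, ∀ e : E, (∀ a ∈ 𝔞, a • e = 0) → FrobBC.tmul R p n r e = 0

/-! ### The module `Φ(E)` and the Frobenius shift -/

/-- The Frobenius `a ↦ a ^ p`, as an `R`-algebra map `R^{(n)} → R^{(n+1)}`. -/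
def frobStepAlg (R : Type u) (p n : ℕ) [CommRing R] [Fact p.Prime] [CharP R p] :
    FrobAlg R p n →ₐ[R] FrobAlg R p (n + 1) :=
  { (show FrobAlg R p n →+* FrobAlg R p (n + 1) from frobenius R p) with
    commutes' := fun r => by
      show frobenius R p (((frobenius R p) ^ n) r) = ((frobenius R p) ^ (n + 1)) r
      rw [pow_succ']
      rfl }

/-- The Frobenius `a ↦ a ^ p`, as an `R`-linear map `R^{(n)} → R^{(n+1)}`. -/
def frobStep (R : Type u) (p n : ℕ) [CommRing R] [Fact p.Prime] [CharP R p] :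
    FrobAlg R p n →ₗ[R] FrobAlg R p (n + 1) :=
  (frobStepAlg R p n).toLinearMap

/-- The graded module `Φ(E) = ⊕_{n ≥ 0} R^{(n)} ⊗_R E`. -/
def PhiModule (R : Type u) (p : ℕ) [CommRing R] [Fact p.Prime] [CharP R p]
    (E : Type v) [AddCommGroup E] [Module R E] : Type (max u v) :=
  ⨁ n : ℕ, FrobBC R p n E

namespace PhiModule

variable (R : Type u) (p : ℕ) [CommRing R] [Fact p.Prime] [CharP R p]
  (E : Type v) [AddCommGroup E] [Module R E]

noncomputable instance : AddCommGroup (PhiModule R p E) :=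
  inferInstanceAs (AddCommGroup (⨁ n : ℕ, FrobBC R p n E))

noncomputable instance : Module R (PhiModule R p E) :=
  inferInstanceAs (Module R (⨁ n : ℕ, FrobBC R p n E))

/-- The inclusion of the `n`-th component into `Φ(E)`. -/
noncomputable def of (n : ℕ) (g : FrobBC R p n E) : PhiModule R p E :=
  DirectSum.of (fun m : ℕ => FrobBC R p m E) n g

/-- The Frobenius-semilinear shift operator `x` on `Φ(E)`, sending an element
`r ⊗ e` of the `n`-th component to `r ^ p ⊗ e` in the `(n+1)`-th component. -/
noncomputable def shift : PhiModule R p E →+ PhiModule R p E :=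
  DirectSum.toAddMonoid fun n =>
    (DirectSum.of (fun m : ℕ => FrobBC R p m E) (n + 1)).comp
      (TensorProduct.map (frobStep R p n) (LinearMap.id (R := R) (M := E))).toAddMonoidHom

end PhiModule

/-- An ideal `𝔞` of `R` is `Φ(E)`-special if it is the annihilator of an
`R[x,f]`-submodule of `Φ(E)`, i.e. of an `R`-submodule stable under the shift operator. -/
def IsPhiSpecial (R : Type u) (p : ℕ) [CommRing R] [Fact p.Prime] [CharP R p]
    (E : Type v) [AddCommGroup E] [Module R E] (𝔞 : Ideal R) : Prop :=
  ∃ N : Submodule R (PhiModule R p E),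
    (∀ g ∈ N, PhiModule.shift R p E g ∈ N) ∧ 𝔞 = N.annihilator

/-! ### Further notions -/

/-- The `q`-th bracket (Frobenius) power `I^{[q]}` of an ideal: the ideal generated by
the `q`-th powers of the elements of `I`. -/
def Ideal.bracketPow {S : Type u} [CommRing S] (I : Ideal S) (q : ℕ) : Ideal S :=
  Ideal.span ((fun x => x ^ q) '' (I : Set S))

/-- A Noetherian local ring is regular if its maximal ideal can be generated by
`dim S` elements. -/
def IsRegularLocal (S : Type u) [CommRing S] [IsLocalRing S] : Prop :=
  ∃ s : Finset S, (s.card : WithBot (WithTop ℕ)) = ringKrullDim S ∧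
    Ideal.span (s : Set S) = maximalIdeal S

/-- An ideal `𝔟` of `R` is uniformly `F`-compatible if for every `n ≥ 1` and every
`R`-linear map `φ : R^{(n)} → R` one has `φ(𝔟) ⊆ 𝔟`. -/
def UniformlyFCompatible (R : Type u) (p : ℕ) [CommRing R] [Fact p.Prime] [CharP R p]
    (𝔟 : Ideal R) : Prop :=
  ∀ n : ℕ, 1 ≤ n → ∀ φ : FrobAlg R p n →ₗ[R] R, ∀ b ∈ 𝔟, φ (FrobAlg.of R p n b) ∈ 𝔟

/-- `R` is `F`-finite if `R^{(1)}` is a finitely generated `R`-module. -/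
def IsFFinite (R : Type u) (p : ℕ) [CommRing R] [Fact p.Prime] [CharP R p] : Prop :=
  Module.Finite R (FrobAlg R p 1)

/-- A Noetherian local ring `T` of characteristic `p` is strongly `F`-regular in the
sense of Lyubeznik and Smith if the tight closure of `0` in the injective envelope of
the residue field of `T` is zero. -/
def IsStronglyFRegularLS (T : Type u) (p : ℕ) [CommRing T] [IsLocalRing T]
    [Fact p.Prime] [CharP T p] : Prop :=
  ∀ (ET : Type u) [AddCommGroup ET] [Module T ET],
    Module.Injective T ET →
    ∀ ι : (T ⧸ maximalIdeal T) →ₗ[T] ET, Function.Injective ι →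
    (∀ N : Submodule T ET, N ⊓ LinearMap.range ι = ⊥ → N = ⊥) →
    ∀ m : ET,
      (∃ c : T, (∀ P ∈ minimalPrimes T, c ∉ P) ∧
        ∃ N₀ : ℕ, ∀ n : ℕ, N₀ ≤ n → FrobBC.tmul T p n c m = 0) → m = 0

/-- `Q` is a minimal primary decomposition of the ideal `𝔄`: the `Q i` are primary,
`𝔄` is their intersection, their radicals are pairwise distinct, and none of them
contains the intersection of the others. -/
def IsMinimalPrimaryDecomposition {S : Type u} [CommRing S] (𝔄 : Ideal S) {t : ℕ}
    (Q : Fin t → Ideal S) : Prop :=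
  𝔄 = ⨅ i, Q i ∧ (∀ i, (Q i).IsPrimary) ∧
    (Function.Injective fun i => (Q i).radical) ∧
    ∀ i, ¬ (⨅ j, ⨅ (_ : j ≠ i), Q j) ≤ Q i
section AuxMine

variable (R : Type u) (p : ℕ) [CommRing R] [Fact p.Prime] [CharP R p]

lemma frobAlg_smul (n : ℕ) (r : R) (x : FrobAlg R p n) :
    r • x = FrobAlg.of R p n (((frobenius R p) ^ n) r) * x := rfl

lemma frob_pow_add (m k : ℕ) (y : R) :
    ((frobenius R p) ^ (m + k)) y = ((frobenius R p) ^ k) (((frobenius R p) ^ m) y) := by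
  rw [RingHom.coe_pow, RingHom.coe_pow, RingHom.coe_pow, Nat.add_comm,
    Function.iterate_add_apply]

/-- generic finite linear combination map -/
noncomputable def pairmap {M : Type v} [AddCommGroup M] [Module R M] {ι : Type}
    [Fintype ι] (vv : ι → M) : (ι → R) →ₗ[R] M where
  toFun c := ∑ i, c i • vv i
  map_add' c d := by simp [add_smul, Finset.sum_add_distrib]
  map_smul' r c := by simp [mul_smul, Finset.smul_sum]

lemma pairmap_apply {M : Type v} [AddCommGroup M] [Module R M] {ι : Type}
    [Fintype ι] (vv : ι → M) (c : ι → R) : pairmap R vv c = ∑ i, c i • vv i := rfl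

variable {R p}

/-- Key duality lemma: if `m0 ⊗ e` pairs to zero with every functional, it is zero. -/
lemma tensor_eq_zero [IsNoetherianRing R] {M : Type u} [AddCommGroup M] [Module R M]
    {E : Type u} [AddCommGroup E] [Module R E] (hE : Module.Injective R E)
    {ι : Type} [Fintype ι] (mg : ι → M)
    (hgen : ∀ x : M, ∃ c : ι → R, ∑ i, c i • mg i = x)
    (m0 : M) (e : E) (h : ∀ φ : M →ₗ[R] R, φ m0 • e = 0) :
    m0 ⊗ₜ[R] e = (0 : M ⊗[R] E) := by
  classical
  set π : (ι → R) →ₗ[R] M := pairmap R mg with hπdef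
  have hπ : Function.Surjective π := fun x => hgen x
  obtain ⟨a, kk, hkk⟩ := Submodule.fg_iff_exists_fin_generating_family.mp
    (IsNoetherian.noetherian (LinearMap.ker π))
  obtain ⟨c, hc⟩ := hgen m0
  set T : (ι → R) →ₗ[R] (Fin a → R) :=
    LinearMap.pi (fun j => pairmap R (fun i => kk j i)) with hTdef
  have hw : ∀ w : ι → R, T w = 0 → (∑ i, w i * c i) • e = 0 := by
    intro w hTw
    have hker : LinearMap.ker π ≤ LinearMap.ker (pairmap R w) := by
      rw [← hkk, Submodule.span_le]
      rintro _ ⟨j, rfl⟩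
      have h1 : T w j = 0 := by rw [hTw]; rfl
      have h2 : pairmap R w (kk j) = T w j := by
        simp only [hTdef, LinearMap.pi_apply, pairmap_apply, smul_eq_mul, mul_comm]
      simp only [SetLike.mem_coe, LinearMap.mem_ker, h2, h1]
    let eqv := π.quotKerEquivOfSurjective hπ
    let φ : M →ₗ[R] R :=
      (Submodule.liftQ (LinearMap.ker π) (pairmap R w) hker).comp eqv.symm.toLinearMap
    have h1 : eqv (Submodule.Quotient.mk c) = π c := rfl
    have h2 : eqv.symm m0 = Submodule.Quotient.mk c := by
      rw [LinearEquiv.symm_apply_eq, h1, hπdef]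
      exact hc.symm
    have hφ : φ m0 = ∑ i, w i * c i := by
      show Submodule.liftQ _ _ hker (eqv.symm m0) = _
      rw [h2, Submodule.liftQ_apply, pairmap_apply]
      exact Finset.sum_congr rfl fun i _ => by rw [smul_eq_mul, mul_comm]
    have := h φ
    rwa [hφ] at this
  set vv : ι → E := fun i => c i • e with hvvdef
  set θ : (ι → R) →ₗ[R] E := pairmap R vv with hθdef
  have hθ : LinearMap.ker T ≤ LinearMap.ker θ := by
    intro w hw'
    rw [LinearMap.mem_ker] at hw' ⊢
    calc θ w = ∑ i, w i • (c i • e) := rfl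
    _ = (∑ i, w i * c i) • e := by rw [Finset.sum_smul]; simp [smul_smul]
    _ = 0 := hw w hw'
  have hTinj : Function.Injective (Submodule.liftQ (LinearMap.ker T) T le_rfl) := by
    rw [← LinearMap.ker_eq_bot]
    exact Submodule.ker_liftQ_eq_bot _ _ _ le_rfl
  obtain ⟨ψ, hψ⟩ := hE.out (Submodule.liftQ (LinearMap.ker T) T le_rfl) hTinj
    (Submodule.liftQ (LinearMap.ker T) θ hθ)
  have hψT : ∀ w, ψ (T w) = θ w := by
    intro w
    have := hψ (Submodule.Quotient.mk w)
    rwa [Submodule.liftQ_apply, Submodule.liftQ_apply] at this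
  set uu : Fin a → E := fun j => ψ (fun j' => if j = j' then 1 else 0) with huudef
  have hv : ∀ i, vv i = ∑ j, kk j i • uu j := by
    intro i
    have h1 : θ (fun i' => if i = i' then 1 else 0) = vv i := by
      rw [hθdef, pairmap_apply]
      simp
    have h2 : ∀ j, T (fun i' => if i = i' then 1 else 0) j = kk j i := by
      intro j
      show pairmap R (fun i' => kk j i') (fun i' => if i = i' then 1 else 0) = kk j i
      rw [pairmap_apply]
      simp
    rw [← h1, ← hψT, LinearMap.pi_apply_eq_sum_univ]
    exact Finset.sum_congr rfl fun j _ => by rw [h2 j]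
  calc m0 ⊗ₜ[R] e = (∑ i, c i • mg i) ⊗ₜ[R] e := by rw [hc]
    _ = ∑ i, mg i ⊗ₜ[R] vv i := by
        rw [TensorProduct.sum_tmul]
        exact Finset.sum_congr rfl fun i _ => TensorProduct.smul_tmul _ _ _
    _ = ∑ i, ∑ j, (kk j i • mg i) ⊗ₜ[R] uu j := by
        refine Finset.sum_congr rfl fun i _ => ?_
        rw [hv i, TensorProduct.tmul_sum]
        exact Finset.sum_congr rfl fun j _ => (TensorProduct.smul_tmul _ _ _).symm
    _ = ∑ j, (∑ i, kk j i • mg i) ⊗ₜ[R] uu j := by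
        rw [Finset.sum_comm]
        exact Finset.sum_congr rfl fun j _ => (TensorProduct.sum_tmul _ _ _).symm
    _ = 0 := by
        refine Finset.sum_eq_zero fun j _ => ?_
        have hj : kk j ∈ LinearMap.ker π := by
          rw [← hkk]; exact Submodule.subset_span ⟨j, rfl⟩
        have : (∑ i, kk j i • mg i) = π (kk j) := rfl
        rw [this, LinearMap.mem_ker.mp hj, TensorProduct.zero_tmul]

variable (R p)

def frobAlgUn (n : ℕ) (x : FrobAlg R p n) : R := x

lemma frobAlg_sum_bridge (n : ℕ) {ι : Type} [Fintype ι] (c : ι → R) (mgR : ι → R) (x : R) :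
    (∑ i, c i • (FrobAlg.of R p n (mgR i)) = FrobAlg.of R p n x)
      ↔ ∑ i, ((frobenius R p) ^ n) (c i) * mgR i = x := Iff.rfl

/-- `R^{(n)}` is generated by finitely many elements over `R`, given F-finiteness. -/
lemma frobAlg_gens (hFF : IsFFinite R p) (n : ℕ) :
    ∃ (ι : Type) (_ : Fintype ι) (mg : ι → R),
      ∀ x : R, ∃ c : ι → R, ∑ i, ((frobenius R p) ^ n) (c i) * mg i = x := by
  induction n with
  | zero =>
    refine ⟨Fin 1, inferInstance, fun _ => (1 : R), fun x => ⟨fun _ => x, ?_⟩⟩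
    simp
  | succ n ih =>
    obtain ⟨ι, _, mg, hmg⟩ := ih
    haveI : Module.Finite R (FrobAlg R p 1) := hFF
    obtain ⟨l, t, ht⟩ := Module.Finite.exists_fin (R := R) (M := FrobAlg R p 1)
    have ht' : ∀ x : R, ∃ d : Fin l → R,
        ∑ j, ((frobenius R p) ^ 1) (d j) * frobAlgUn R p 1 (t j) = x := by
      intro x
      have hx : FrobAlg.of R p 1 x ∈ Submodule.span R (Set.range t) := by rw [ht]; trivial
      obtain ⟨d, hd⟩ := (Submodule.mem_span_range_iff_exists_fun R).mp hx
      exact ⟨d, (frobAlg_sum_bridge R p 1 d (fun j => frobAlgUn R p 1 (t j)) x).mp hd⟩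
    refine ⟨Fin l × ι, inferInstance,
      (fun ji => frobenius R p (mg ji.2) * frobAlgUn R p 1 (t ji.1)), fun x => ?_⟩
    obtain ⟨d, hd⟩ := ht' x
    choose cc hcc using fun j => hmg (d j)
    refine ⟨fun ji => cc ji.1 ji.2, ?_⟩
    have key : ∀ j : Fin l, frobenius R p (d j) =
        ∑ i, ((frobenius R p) ^ (n + 1)) (cc j i) * frobenius R p (mg i) := by
      intro j
      rw [← hcc j, map_sum]
      refine Finset.sum_congr rfl fun i _ => ?_
      rw [map_mul]
      congr 1
      rw [frob_pow_add R p n 1, pow_one]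
    calc (∑ ji : Fin l × ι, ((frobenius R p) ^ (n + 1)) (cc ji.1 ji.2) *
          (frobenius R p (mg ji.2) * frobAlgUn R p 1 (t ji.1)))
        = ∑ j, ∑ i, ((frobenius R p) ^ (n + 1)) (cc j i) *
            (frobenius R p (mg i) * frobAlgUn R p 1 (t j)) := by
          rw [Fintype.sum_prod_type]
      _ = ∑ j, frobenius R p (d j) * frobAlgUn R p 1 (t j) := by
          refine Finset.sum_congr rfl fun j _ => ?_
          rw [key j, Finset.sum_mul]
          exact Finset.sum_congr rfl fun i _ => (mul_assoc _ _ _).symm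
      _ = x := by
          rw [← hd]
          exact Finset.sum_congr rfl fun j _ => by rw [pow_one]


section ShiftAux

variable (R : Type u) (p : ℕ) [CommRing R] [Fact p.Prime] [CharP R p]

lemma un_smul (k : ℕ) (a : R) (x : FrobAlg R p k) :
    frobAlgUn R p k (a • x) = ((frobenius R p) ^ k) a * frobAlgUn R p k x := rfl

lemma of_mul_pow (k : ℕ) (b y : R) :
    FrobAlg.of R p k (((frobenius R p) ^ k) b * y) = b • FrobAlg.of R p k y := rfl

lemma un_add (k : ℕ) (x y : FrobAlg R p k) :
    frobAlgUn R p k (x + y) = frobAlgUn R p k x + frobAlgUn R p k y := rfl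

lemma of_add (k : ℕ) (x y : R) :
    FrobAlg.of R p k (x + y) = FrobAlg.of R p k x + FrobAlg.of R p k y := rfl

lemma un_mul (k : ℕ) (x y : FrobAlg R p k) :
    frobAlgUn R p k (x * y) = frobAlgUn R p k x * frobAlgUn R p k y := rfl

/-- iterated Frobenius step `R^{(j)} → R^{(j+n)}` -/
noncomputable def frobIter (j : ℕ) : (n : ℕ) → (FrobAlg R p j →ₗ[R] FrobAlg R p (j + n))
  | 0 => LinearMap.id
  | n + 1 => (frobStep R p (j + n)).comp (frobIter j n)

lemma frobIter_apply (j n : ℕ) (s : FrobAlg R p j) :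
    frobAlgUn R p (j + n) (frobIter R p j n s)
      = ((frobenius R p) ^ n) (frobAlgUn R p j s) := by
  induction n with
  | zero => rw [pow_zero]; rfl
  | succ n ih =>
    have h1 : frobIter R p j (n+1) s = frobStep R p (j+n) (frobIter R p j n s) := rfl
    rw [h1]
    show frobAlgUn R p ((j + n) + 1) (frobStep R p (j+n) (frobIter R p j n s))
        = ((frobenius R p) ^ (n + 1)) (frobAlgUn R p j s)
    have h2 : frobAlgUn R p ((j+n)+1) (frobStep R p (j+n) (frobIter R p j n s))
        = frobenius R p (frobAlgUn R p (j+n) (frobIter R p j n s)) := rfl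
    rw [h2, ih, frob_pow_add R p n 1, pow_one]

/-- `φ : R^{(n)} → R` twisted to `R^{(j+n)} → R^{(j)}`. -/
noncomputable def twist (n j : ℕ) (φ : FrobAlg R p n →ₗ[R] R) :
    FrobAlg R p (j + n) →ₗ[R] FrobAlg R p j where
  toFun x := FrobAlg.of R p j (φ (FrobAlg.of R p n (frobAlgUn R p (j + n) x)))
  map_add' x y := by
    show FrobAlg.of R p j (φ (FrobAlg.of R p n (frobAlgUn R p (j + n) (x + y)))) =
      FrobAlg.of R p j (φ (FrobAlg.of R p n (frobAlgUn R p (j + n) x))) +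
        FrobAlg.of R p j (φ (FrobAlg.of R p n (frobAlgUn R p (j + n) y)))
    rw [un_add, of_add, map_add, of_add]
  map_smul' a x := by
    show FrobAlg.of R p j (φ (FrobAlg.of R p n (frobAlgUn R p (j + n) (a • x)))) =
      (RingHom.id R) a • FrobAlg.of R p j (φ (FrobAlg.of R p n (frobAlgUn R p (j + n) x)))
    simp only [RingHom.id_apply]
    rw [un_smul, frob_pow_add R p j n, of_mul_pow, map_smul, smul_eq_mul, of_mul_pow]

lemma twist_apply (n j : ℕ) (φ : FrobAlg R p n →ₗ[R] R) (x : FrobAlg R p (j + n)) :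
    twist R p n j φ x
      = FrobAlg.of R p j (φ (FrobAlg.of R p n (frobAlgUn R p (j + n) x))) := rfl

variable {M : Type v} [AddCommGroup M] [Module R M]

lemma twist_key_raw (n j : ℕ) (φ : FrobAlg R p n →ₗ[R] R) (r : R)
    (h : FrobAlg R p j ⊗[R] M) :
    TensorProduct.map (twist R p n j φ) LinearMap.id
        ((FrobAlg.of R p (j + n) r) • (TensorProduct.map (frobIter R p j n) LinearMap.id h))
      = (FrobAlg.of R p j (φ (FrobAlg.of R p n r))) • h := by
  induction h with
  | zero => rw [map_zero, smul_zero, map_zero, smul_zero]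
  | tmul s e =>
    rw [TensorProduct.map_tmul, TensorProduct.smul_tmul', TensorProduct.map_tmul,
      TensorProduct.smul_tmul', smul_eq_mul, smul_eq_mul, LinearMap.id_apply]
    congr 1
    rw [twist_apply, un_mul]
    have h1 : frobAlgUn R p (j+n) (FrobAlg.of R p (j+n) r) = r := rfl
    rw [h1, frobIter_apply, mul_comm r, of_mul_pow, map_smul, smul_eq_mul]
    show FrobAlg.of R p j (frobAlgUn R p j s * φ (FrobAlg.of R p n r)) = _
    rw [mul_comm]
    rfl
  | add x y hx hy =>
    rw [map_add, smul_add, map_add, hx, hy, smul_add]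

/-- `x^n` on a component, as a plain function between base-change modules. -/
noncomputable def frobBCIter (n j : ℕ) (h : FrobBC R p j M) : FrobBC R p (j + n) M :=
  TensorProduct.map (frobIter R p j n) LinearMap.id h

/-- the twist of `φ`, as a plain function between base-change modules. -/
noncomputable def twistBC (n j : ℕ) (φ : FrobAlg R p n →ₗ[R] R)
    (h : FrobBC R p (j + n) M) : FrobBC R p j M :=
  TensorProduct.map (twist R p n j φ) LinearMap.id h

lemma twist_key (n j : ℕ) (φ : FrobAlg R p n →ₗ[R] R) (r : R) (h : FrobBC R p j M) :
    twistBC R p n j φ (r • frobBCIter R p n j h) = φ (FrobAlg.of R p n r) • h :=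
  twist_key_raw R p n j φ r h

end ShiftAux

section CompatAux

variable (R : Type u) (p : ℕ) [CommRing R] [Fact p.Prime] [CharP R p]
  (E : Type v) [AddCommGroup E] [Module R E]

lemma component_shift (j : ℕ) (g : PhiModule R p E) :
    DirectSum.component R ℕ (fun m => FrobBC R p m E) (j + 1) (PhiModule.shift R p E g)
      = TensorProduct.map (frobStep R p j) LinearMap.id
          (DirectSum.component R ℕ (fun m => FrobBC R p m E) j g) := by
  induction g using DirectSum.induction_on with
  | zero => erw [map_zero]
  | of i u =>
    have h1 : PhiModule.shift R p E (DirectSum.of (fun m => FrobBC R p m E) i u)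
        = DirectSum.of (fun m => FrobBC R p m E) (i + 1)
            (TensorProduct.map (frobStep R p i) LinearMap.id u) := by
      rw [PhiModule.shift]
      exact DirectSum.toAddMonoid_of
        (fun k => (DirectSum.of (fun m => FrobBC R p m E) (k + 1)).comp
          (TensorProduct.map (frobStep R p k) LinearMap.id).toAddMonoidHom) i u
    rw [h1]
    by_cases hij : i = j
    · subst hij
      erw [← DirectSum.lof_eq_of R, ← DirectSum.lof_eq_of R,
        DirectSum.component.lof_self, DirectSum.component.lof_self]
    · erw [← DirectSum.lof_eq_of R, ← DirectSum.lof_eq_of R,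
        DirectSum.component.of, DirectSum.component.of,
        dif_neg hij, dif_neg (fun h => hij (Nat.succ_injective h)), map_zero]
      rfl
  | add x y hx hy =>
    erw [map_add, map_add, hx, hy]
    exact (map_add _ _ _).symm

lemma component_shift_iter (n j : ℕ) (g : PhiModule R p E) :
    DirectSum.component R ℕ (fun m => FrobBC R p m E) (j + n)
        ((PhiModule.shift R p E)^[n] g)
      = frobBCIter R p n j (DirectSum.component R ℕ (fun m => FrobBC R p m E) j g) := by
  induction n with
  | zero =>
    show DirectSum.component R ℕ (fun m => FrobBC R p m E) j g = _
    rw [frobBCIter, show frobIter R p j 0 = LinearMap.id from rfl, TensorProduct.map_id]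
    rfl
  | succ n ih =>
    rw [Function.iterate_succ_apply']
    show DirectSum.component R ℕ (fun m => FrobBC R p m E) ((j + n) + 1)
        (PhiModule.shift R p E ((PhiModule.shift R p E)^[n] g)) = _
    rw [component_shift, ih, frobBCIter, frobBCIter]
    have hcomp : ∀ (z : FrobAlg R p j ⊗[R] E),
        TensorProduct.map (frobStep R p (j+n)) LinearMap.id
          (TensorProduct.map (frobIter R p j n) LinearMap.id z)
        = TensorProduct.map ((frobStep R p (j+n)).comp (frobIter R p j n)) LinearMap.id z := by
      intro z
      rw [← LinearMap.comp_apply, ← TensorProduct.map_comp, LinearMap.id_comp]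
    exact hcomp _

lemma ann_compat (N : Submodule R (PhiModule R p E))
    (hN : ∀ g ∈ N, PhiModule.shift R p E g ∈ N)
    {r : R} (hr : r ∈ N.annihilator) (n : ℕ) (φ : FrobAlg R p n →ₗ[R] R) :
    φ (FrobAlg.of R p n r) ∈ N.annihilator := by
  rw [Submodule.mem_annihilator] at hr ⊢
  intro g hg
  have hgn : ∀ k, (PhiModule.shift R p E)^[k] g ∈ N := by
    intro k
    induction k with
    | zero => exact hg
    | succ k ih => rw [Function.iterate_succ_apply']; exact hN _ ih
  have h0 : r • (PhiModule.shift R p E)^[n] g = 0 := hr _ (hgn n)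
  refine DirectSum.ext_component R fun j => ?_
  erw [map_smul, map_zero]
  calc φ (FrobAlg.of R p n r) • DirectSum.component R ℕ (fun m => FrobBC R p m E) j g
      = twistBC R p n j φ (r • frobBCIter R p n j
          (DirectSum.component R ℕ (fun m => FrobBC R p m E) j g)) :=
        (twist_key R p n j φ r _).symm
    _ = twistBC R p n j φ (r • (DirectSum.component R ℕ (fun m => FrobBC R p m E) (j + n)
          ((PhiModule.shift R p E)^[n] g))) := by rw [component_shift_iter]
    _ = twistBC R p n j φ (DirectSum.component R ℕ (fun m => FrobBC R p m E) (j + n)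
          (r • (PhiModule.shift R p E)^[n] g)) := by erw [map_smul]
    _ = 0 := by erw [h0, map_zero, twistBC, map_zero]; rfl

end CompatAux

end AuxMine


theorem special_implies_fully_special_of_F_finite (R : Type u) [CommRing R] [IsNoetherianRing R] [IsLocalRing R]
    (p : ℕ) [Fact p.Prime] [CharP R p]
    (E : Type u) [AddCommGroup E] [Module R E]
    (hE : Module.Injective R E)
    (ι : (R ⧸ maximalIdeal R) →ₗ[R] E) (hι : Function.Injective ι)
    (hess : ∀ N : Submodule R E, N ⊓ LinearMap.range ι = ⊥ → N = ⊥)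
    (hFpure : IsFPure R p) (hFF : IsFFinite R p)
    (𝔞 : Ideal R) (h𝔞 : IsPhiSpecial R p E 𝔞) :
    IsFullyPhiSpecial R p E 𝔞 := by
  intro n hn r hr e he
  obtain ⟨N, hN, hAnn⟩ := h𝔞
  obtain ⟨ι', _, mgR, hmg⟩ := frobAlg_gens R p hFF n
  have hgen : ∀ x : FrobAlg R p n, ∃ c : ι' → R,
      ∑ i, c i • (FrobAlg.of R p n (mgR i)) = x := by
    intro x
    obtain ⟨c, hc⟩ := hmg (frobAlgUn R p n x)
    exact ⟨c, (frobAlg_sum_bridge R p n c mgR (frobAlgUn R p n x)).mpr hc⟩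
  have key : ∀ φ : FrobAlg R p n →ₗ[R] R, φ (FrobAlg.of R p n r) • e = 0 := by
    intro φ
    have hmem : φ (FrobAlg.of R p n r) ∈ 𝔞 := by
      rw [hAnn]
      exact ann_compat R p E N hN (hAnn ▸ hr) n φ
    exact he _ hmem
  show (FrobAlg.of R p n r ⊗ₜ[R] e : FrobAlg R p n ⊗[R] E) = 0
  exact tensor_eq_zero hE (fun i => FrobAlg.of R p n (mgR i)) hgen (FrobAlg.of R p n r) e key
end

section
/- Suppose R is F-finite and F-pure, and let u be a generator of the socle of E, i.e., u ∈ E with (0 :_E 𝔪) = Ru and u ≠ 0. Let P = {r ∈ R : r ⊗ u = 0 in R^{(n)} ⊗_R E for all sufficiently large n} (the splitting prime of Aberbach and Enescu). Then P is a proper Φ(E)-special ideal of R that contains every proper Φ(E)-special ideal of R; that is, P equals the unique largest Φ(E)-special proper ideal of R. -/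
open TensorProduct IsLocalRing DirectSum

universe u v

section Helpers

namespace SP

variable (R : Type u) [CommRing R] (p : ℕ) [Fact p.Prime] [CharP R p]
variable (E : Type u) [AddCommGroup E] [Module R E]

lemma frobAlg_smul (n : ℕ) (r : R) (a : FrobAlg R p n) :
    r • a = FrobAlg.of R p n (r ^ p ^ n) * a := by
  show FrobAlg.of R p n (((frobenius R p) ^ n) r) * a = _
  rw [show ((frobenius R p) ^ n) r = r ^ p ^ n from iterate_frobenius (R := R) (p := p) (n := n) (x := r)]

variable {E}

lemma smul_tmul_left (n : ℕ) (r a : R) (e : E) :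
    r • FrobBC.tmul R p n a e = FrobBC.tmul R p n (r * a) e := rfl

lemma tmul_shift (n : ℕ) (r a : R) (e : E) :
    FrobBC.tmul R p n (a * r ^ p ^ n) e = FrobBC.tmul R p n a (r • e) := by
  have h : FrobAlg.of R p n (a * r ^ p ^ n) = r • FrobAlg.of R p n a := by
    rw [frobAlg_smul R p n r]
    exact mul_comm _ _
  show FrobAlg.of R p n (a * r ^ p ^ n) ⊗ₜ[R] e = FrobAlg.of R p n a ⊗ₜ[R] (r • e)
  rw [h, TensorProduct.smul_tmul]

end SP

end Helpers
namespace SP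

variable {R : Type u} [CommRing R] {p : ℕ} [Fact p.Prime] [CharP R p]
variable {E : Type u} [AddCommGroup E] [Module R E]

/-- The element `1 ⊗ u` in the `n`-th component of `Φ(E)`. -/
noncomputable def gamma (u : E) (n : ℕ) : PhiModule R p E :=
  PhiModule.of R p E n (FrobBC.tmul R p n 1 u)

/-- The shift `a ⊗ e ↦ a^p ⊗ e` on the `n`-th component, as an additive map. -/
noncomputable def sigma (n : ℕ) : FrobBC R p n E →+ FrobBC R p (n + 1) E :=
  (TensorProduct.map (frobStep R p n) (LinearMap.id (R := R) (M := E))).toAddMonoidHom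

lemma sigma_tmul (n : ℕ) (a : R) (e : E) :
    sigma n (FrobBC.tmul R p n a e) = FrobBC.tmul R p (n + 1) (a ^ p) e := rfl

lemma shift_of (n : ℕ) (x : FrobBC R p n E) :
    PhiModule.shift R p E (PhiModule.of R p E n x)
      = PhiModule.of R p E (n + 1) (sigma n x) :=
  DirectSum.toAddMonoid_of _ _ _

lemma of_smul (n : ℕ) (r : R) (x : FrobBC R p n E) :
    r • PhiModule.of R p E n x = PhiModule.of R p E n (r • x) :=
  ((DirectSum.lof R ℕ (fun m => FrobBC R p m E) n).map_smul r x).symm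

lemma sigma_smul (n : ℕ) (r : R) (x : FrobBC R p n E) :
    sigma n (r • x) = r ^ p • sigma n x := by
  induction x using TensorProduct.induction_on with
  | zero => show sigma n (r • (0 : FrobBC R p n E)) = r ^ p • sigma n (0 : FrobBC R p n E); simp
  | tmul a e =>
      rw [show (a ⊗ₜ[R] e : FrobAlg R p n ⊗[R] E) = FrobBC.tmul R p n (id a : R) e from rfl,
        smul_tmul_left, sigma_tmul, sigma_tmul, mul_pow]
      exact (smul_tmul_left R p (n + 1) (r ^ p) (a ^ p) e).symm
  | add x y hx hy =>
      obtain ⟨x, rfl⟩ : ∃ x' : FrobBC R p n E, x' = x := ⟨x, rfl⟩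
      obtain ⟨y, rfl⟩ : ∃ y' : FrobBC R p n E, y' = y := ⟨y, rfl⟩
      show sigma n (r • (x + y)) = r ^ p • sigma n (x + y)
      rw [smul_add, map_add, hx, hy, map_add, smul_add]

lemma shift_smul (r : R) (g : PhiModule R p E) :
    PhiModule.shift R p E (r • g) = r ^ p • PhiModule.shift R p E g := by
  induction g using DirectSum.induction_on with
  | zero => show PhiModule.shift R p E (r • (0 : PhiModule R p E)) = r ^ p • PhiModule.shift R p E (0 : PhiModule R p E); simp
  | of n x =>
      rw [show (DirectSum.of _ n x : PhiModule R p E) = PhiModule.of R p E n x from rfl,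
        of_smul, shift_of, shift_of, sigma_smul, of_smul]
  | add x y hx hy =>
      obtain ⟨x, rfl⟩ : ∃ x' : PhiModule R p E, x' = x := ⟨x, rfl⟩
      obtain ⟨y, rfl⟩ : ∃ y' : PhiModule R p E, y' = y := ⟨y, rfl⟩
      show PhiModule.shift R p E (r • (x + y)) = r ^ p • PhiModule.shift R p E (x + y)
      rw [smul_add, map_add, hx, hy, map_add, smul_add]

end SP
namespace SP

variable {R : Type u} [CommRing R] {p : ℕ} [Fact p.Prime] [CharP R p]
variable {E : Type u} [AddCommGroup E] [Module R E]

/-- Projection of `Φ(E)` onto its `m`-th component. -/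
noncomputable def proj (m : ℕ) : PhiModule R p E →ₗ[R] FrobBC R p m E :=
  DirectSum.component R ℕ (fun n => FrobBC R p n E) m

lemma proj_of_same (n : ℕ) (x : FrobBC R p n E) : proj n (PhiModule.of R p E n x) = x :=
  DirectSum.of_eq_same (β := fun m => FrobBC R p m E) n x

lemma proj_of_ne (i j : ℕ) (x : FrobBC R p i E) (h : i ≠ j) :
    proj j (PhiModule.of R p E i x) = 0 :=
  DirectSum.of_eq_of_ne (β := fun m => FrobBC R p m E) i j x (Ne.symm h)

lemma of_injective (n : ℕ) (x : FrobBC R p n E) (h : PhiModule.of R p E n x = 0) : x = 0 := by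
  have := congrArg (proj n) h
  rwa [proj_of_same, map_zero] at this

lemma proj_shift (m : ℕ) (g : PhiModule R p E) :
    proj (m + 1) (PhiModule.shift R p E g) = sigma m (proj m g) := by
  induction g using DirectSum.induction_on with
  | zero => show proj (m + 1) (PhiModule.shift R p E (0 : PhiModule R p E)) = sigma m (proj m (0 : PhiModule R p E)); simp
  | of i x =>
      rw [show (DirectSum.of _ i x : PhiModule R p E) = PhiModule.of R p E i x from rfl, shift_of]
      by_cases h : i = m
      · subst h; rw [proj_of_same, proj_of_same]
      · rw [proj_of_ne _ _ _ (fun hc => h (Nat.succ_injective hc)), proj_of_ne _ _ _ h, map_zero]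
  | add x y hx hy =>
      obtain ⟨x, rfl⟩ : ∃ x' : PhiModule R p E, x' = x := ⟨x, rfl⟩
      obtain ⟨y, rfl⟩ : ∃ y' : PhiModule R p E, y' = y := ⟨y, rfl⟩
      show proj (m + 1) (PhiModule.shift R p E (x + y)) = sigma m (proj m (x + y))
      rw [map_add, map_add, map_add, hx, hy, map_add]

/-- Iterated component shift. -/
noncomputable def tau (k : ℕ) : ∀ j : ℕ, FrobBC R p k E →+ FrobBC R p (k + j) E
  | 0 => AddMonoidHom.id _
  | j + 1 => (sigma (k + j)).comp (tau k j)

lemma tau_tmul (k j : ℕ) (a : R) (e : E) :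
    tau k j (FrobBC.tmul R p k a e) = FrobBC.tmul R p (k + j) (a ^ p ^ j) e := by
  induction j with
  | zero => rw [pow_zero, pow_one]; rfl
  | succ j ih =>
      show sigma (k + j) (tau k j (FrobBC.tmul R p k a e)) = _
      rw [ih, sigma_tmul, ← pow_mul, ← pow_succ]; rfl

lemma proj_shift_iter (j k : ℕ) (g : PhiModule R p E) :
    proj (k + j) ((PhiModule.shift R p E)^[j] g) = tau k j (proj k g) := by
  induction j with
  | zero => rfl
  | succ j ih =>
      rw [Function.iterate_succ_apply']
      show proj ((k + j) + 1) (PhiModule.shift R p E _) = _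
      rw [proj_shift, ih]; rfl

/-- Identity map from a Frobenius twist of `R` back to `R`. -/
def unof {m : ℕ} (c : FrobAlg R p m) : R := c

/-- Identity cast between copies of `R` with different Frobenius twists. -/
def recast (m n : ℕ) (c : FrobAlg R p m) : FrobAlg R p n := c

lemma recast_smul (k n : ℕ) (r : R) (c : FrobAlg R p (k + n)) :
    recast (k + n) n (r • c) = (r ^ p ^ k) • recast (k + n) n c := by
  rw [frobAlg_smul R p (k + n) r c, frobAlg_smul R p n (r ^ p ^ k) (recast (k + n) n c)]
  have hp : (r : R) ^ p ^ (k + n) = (r ^ p ^ k) ^ p ^ n := by rw [← pow_mul, ← pow_add]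
  rw [hp]; rfl

/-- Descent map `R^{(k+n)} ⊗ E →+ R^{(k)} ⊗ E` induced by an `R`-linear map
`ψ : R^{(n)} → R`. -/
noncomputable def desc (n : ℕ) (ψ : FrobAlg R p n →ₗ[R] R) (k : ℕ) :
    FrobBC R p (k + n) E →+ FrobBC R p k E :=
  TensorProduct.liftAddHom
    (AddMonoidHom.mk'
      (fun c => AddMonoidHom.mk' (fun e => FrobBC.tmul R p k (ψ (recast (k + n) n c)) e)
        (fun e₁ e₂ => TensorProduct.tmul_add _ e₁ e₂))
      (fun c₁ c₂ => AddMonoidHom.ext fun e => by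
        show FrobBC.tmul R p k (ψ (recast (k + n) n c₁ + recast (k + n) n c₂)) e
          = FrobBC.tmul R p k (ψ (recast (k + n) n c₁)) e
            + FrobBC.tmul R p k (ψ (recast (k + n) n c₂)) e
        rw [map_add]
        exact TensorProduct.add_tmul _ _ _))
    (by
      intro r c e
      show FrobBC.tmul R p k (ψ (recast (k + n) n (r • c))) e
        = FrobBC.tmul R p k (ψ (recast (k + n) n c)) (r • e)
      rw [recast_smul, map_smul, smul_eq_mul, mul_comm, tmul_shift])

lemma desc_tmul (n : ℕ) (ψ : FrobAlg R p n →ₗ[R] R) (k : ℕ) (a : R) (e : E) :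
    desc n ψ k (FrobBC.tmul R p (k + n) a e)
      = FrobBC.tmul R p k (ψ (FrobAlg.of R p n a)) e := rfl

lemma desc_smul_tau (n : ℕ) (ψ : FrobAlg R p n →ₗ[R] R) (r : R)
    (hψ : ψ (FrobAlg.of R p n r) = 1) (k : ℕ) (h : FrobBC R p k E) :
    desc n ψ k (r • tau k n h) = h := by
  induction h using TensorProduct.induction_on with
  | zero =>
      show desc n ψ k (r • tau k n (0 : FrobBC R p k E)) = (0 : FrobBC R p k E)
      rw [map_zero, smul_zero, map_zero]
  | tmul a e =>
      show desc n ψ k (r • tau k n (FrobBC.tmul R p k (unof a) e)) = FrobBC.tmul R p k (unof a) e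
      rw [tau_tmul, smul_tmul_left]
      rw [show FrobBC.tmul R p (k + n) (r * unof a ^ p ^ n) e
          = FrobBC.tmul R p (k + n) (unof a ^ p ^ n * r) e by rw [mul_comm]]
      rw [desc_tmul]
      have hkey : ψ (FrobAlg.of R p n (unof a ^ p ^ n * r)) = unof a := by
        have h2 : FrobAlg.of R p n (unof a ^ p ^ n * r) = unof a • FrobAlg.of R p n r := by
          rw [frobAlg_smul R p n (unof a) (FrobAlg.of R p n r)]; rfl
        rw [h2, map_smul, hψ, smul_eq_mul, mul_one]
      rw [hkey]
  | add x y hx hy =>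
      obtain ⟨x, rfl⟩ : ∃ x' : FrobBC R p k E, x' = x := ⟨x, rfl⟩
      obtain ⟨y, rfl⟩ : ∃ y' : FrobBC R p k E, y' = y := ⟨y, rfl⟩
      show desc n ψ k (r • tau k n (x + y)) = x + y
      rw [map_add, smul_add, map_add, hx, hy]

end SP
namespace SP

variable {R : Type u} [CommRing R] {p : ℕ} [Fact p.Prime] [CharP R p]
variable {E : Type u} [AddCommGroup E] [Module R E]

/-- Evaluation `R^{(0)} ⊗ E →+ E`. -/
noncomputable def ev0 : FrobBC R p 0 E →+ E :=
  TensorProduct.liftAddHom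
    (AddMonoidHom.mk'
      (fun c => AddMonoidHom.mk' (fun e => unof c • e) (fun e₁ e₂ => smul_add _ e₁ e₂))
      (fun c₁ c₂ => AddMonoidHom.ext fun e => by
        show (unof c₁ + unof c₂) • e = unof c₁ • e + unof c₂ • e
        rw [add_smul]))
    (by
      intro r c e
      show unof (r • c) • e = unof c • (r • e)
      have h1 : unof (r • c) = r * unof c := by
        rw [frobAlg_smul R p 0 r c]
        show r ^ p ^ 0 * unof c = r * unof c
        rw [pow_zero, pow_one]
      rw [h1, mul_smul, smul_comm])

lemma ev0_tmul (a : R) (e : E) : ev0 (FrobBC.tmul R p 0 a e) = a • e := rfl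

/-- The comparison map `R^{(n+1)} ⊗ E →+ R^{(1)} ⊗ (R^{(n)} ⊗ E)`. -/
noncomputable def down (n : ℕ) : FrobBC R p (n + 1) E →+ FrobBC R p 1 (FrobBC R p n E) :=
  TensorProduct.liftAddHom
    (AddMonoidHom.mk'
      (fun c => AddMonoidHom.mk'
        (fun e => FrobBC.tmul R p 1 (unof c) (FrobBC.tmul R p n 1 e))
        (fun e₁ e₂ => by
          show FrobBC.tmul R p 1 (unof c) (FrobBC.tmul R p n 1 (e₁ + e₂)) = _
          rw [show FrobBC.tmul R p n 1 (e₁ + e₂)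
            = FrobBC.tmul R p n 1 e₁ + FrobBC.tmul R p n 1 e₂ from TensorProduct.tmul_add _ _ _]
          exact TensorProduct.tmul_add _ _ _))
      (fun c₁ c₂ => AddMonoidHom.ext fun e => by
        show FrobBC.tmul R p 1 (unof c₁ + unof c₂) _ = _
        exact TensorProduct.add_tmul _ _ _))
    (by
      intro r c e
      show FrobBC.tmul R p 1 (unof (r • c)) (FrobBC.tmul R p n 1 e)
        = FrobBC.tmul R p 1 (unof c) (FrobBC.tmul R p n 1 (r • e))
      have h1 : unof (r • c) = unof c * (r ^ p ^ n) ^ p ^ 1 := by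
        rw [frobAlg_smul R p (n + 1) r c]
        show r ^ p ^ (n + 1) * unof c = unof c * (r ^ p ^ n) ^ p ^ 1
        rw [mul_comm, ← pow_mul, pow_one, ← pow_succ]
      have h2 : FrobBC.tmul R p n 1 (r • e) = r ^ p ^ n • FrobBC.tmul R p n 1 e := by
        rw [smul_tmul_left, mul_one, ← one_mul (r ^ p ^ n), tmul_shift]
      rw [h1, h2, tmul_shift])

lemma down_tmul (n : ℕ) (a : R) (e : E) :
    down n (FrobBC.tmul R p (n + 1) a e)
      = FrobBC.tmul R p 1 a (FrobBC.tmul R p n 1 e) := rfl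

lemma tmul_one_ne_zero (hFpure : IsFPure R p) (u : E) (hu : u ≠ 0) (n : ℕ) :
    FrobBC.tmul R p n 1 u ≠ 0 := by
  induction n with
  | zero =>
      intro h
      apply hu
      have := congrArg (ev0 (R := R) (p := p)) h
      rwa [ev0_tmul, one_smul, map_zero] at this
  | succ n ih =>
      intro h
      apply ih
      have hinj := hFpure (FrobBC R p n E)
      have h2 := congrArg (down n) h
      rw [down_tmul, map_zero] at h2
      have h3 : FrobBC.tmul R p 1 (1 : R) (FrobBC.tmul R p n 1 u)
          = FrobBC.tmul R p 1 (1 : R) (0 : FrobBC R p n E) := by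
        rw [h2]
        show (0 : FrobBC R p 1 (FrobBC R p n E)) = _
        rw [show FrobBC.tmul R p 1 (1 : R) (0 : FrobBC R p n E) = 0 from
          TensorProduct.tmul_zero _ _]
      exact hinj h3

lemma frobAlg_finite (hFF : IsFFinite R p) (n : ℕ) : Module.Finite R (FrobAlg R p n) := by
  induction n with
  | zero =>
      let lmap : R →ₗ[R] FrobAlg R p 0 :=
        { toFun := fun x => FrobAlg.of R p 0 x
          map_add' := fun x y => rfl
          map_smul' := fun r x => by
            show FrobAlg.of R p 0 (r * x) = r • FrobAlg.of R p 0 x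
            rw [frobAlg_smul R p 0 r (FrobAlg.of R p 0 x)]
            show FrobAlg.of R p 0 (r * x) = FrobAlg.of R p 0 (r ^ p ^ 0 * x)
            rw [pow_zero, pow_one] }
      exact Module.Finite.of_surjective lmap (fun y => ⟨unof y, rfl⟩)
  | succ n ih =>
      letI alg : Algebra (FrobAlg R p n) (FrobAlg R p (n + 1)) :=
        RingHom.toAlgebra (show FrobAlg R p n →+* FrobAlg R p (n + 1) from frobenius R p)
      have hsmul : ∀ (a : FrobAlg R p n) (b : FrobAlg R p (n + 1)),
          a • b = FrobAlg.of R p (n + 1) (unof a ^ p) * b := by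
        intro a b
        rw [Algebra.smul_def, RingHom.algebraMap_toAlgebra]
        rfl
      haveI tower : IsScalarTower R (FrobAlg R p n) (FrobAlg R p (n + 1)) := by
        constructor
        intro x y z
        rw [hsmul, frobAlg_smul R p n x y, frobAlg_smul R p (n + 1) x (y • z), hsmul]
        show FrobAlg.of R p (n + 1) ((x ^ p ^ n * unof y) ^ p) * z
          = FrobAlg.of R p (n + 1) (x ^ p ^ (n + 1)) * (FrobAlg.of R p (n + 1) (unof y ^ p) * z)
        rw [← mul_assoc]
        congr 1
        show FrobAlg.of R p (n + 1) ((x ^ p ^ n * unof y) ^ p)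
          = FrobAlg.of R p (n + 1) (x ^ p ^ (n + 1) * unof y ^ p)
        rw [mul_pow, ← pow_mul, ← pow_succ]
      haveI fin1 : Module.Finite (FrobAlg R p n) (FrobAlg R p (n + 1)) := hFF
      haveI := ih
      exact Module.Finite.trans (FrobAlg R p n) (FrobAlg R p (n + 1))

end SP
namespace SP

section Duality

variable {R : Type u} [CommRing R] [IsNoetherianRing R]
variable {E : Type u} [AddCommGroup E] [Module R E]

noncomputable def piTensor (t : ℕ) : ((Fin t → R) ⊗[R] E) ≃ₗ[R] (Fin t → E) :=
  (TensorProduct.comm R (Fin t → R) E) ≪≫ₗ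
    (TensorProduct.piRight R R E (fun _ : Fin t => R)) ≪≫ₗ
    (LinearEquiv.piCongrRight fun _ : Fin t => TensorProduct.rid R E)

lemma piTensor_apply (t : ℕ) (q : Fin t → R) (e : E) (i : Fin t) :
    piTensor t (q ⊗ₜ[R] e) i = q i • e := by
  simp [piTensor]

lemma pair_eq (t : ℕ) (x : (Fin t → R) ⊗[R] E) (i : Fin t) :
    piTensor t x i
      = TensorProduct.lid R E (LinearMap.rTensor E (LinearMap.proj i) x) := by
  induction x using TensorProduct.induction_on with
  | zero => simp
  | tmul q e =>
      rw [piTensor_apply, LinearMap.rTensor_tmul]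
      simp
  | add x y hx hy =>
      rw [map_add, map_add, map_add, Pi.add_apply, hx, hy]

/-- The `j`-th coordinate projection as a linear map. -/
noncomputable def projR (s : ℕ) (j : Fin s) : (Fin s → R) →ₗ[R] R := LinearMap.proj j

lemma dual_expand {s : ℕ} (χ : (Fin s → R) →ₗ[R] R) :
    (∑ j : Fin s, χ (Pi.single j 1) • projR s j) = χ := by
  apply LinearMap.ext
  intro x
  rw [LinearMap.sum_apply]
  have hx : χ x = ∑ j : Fin s, x j * χ (Pi.single j 1) := by
    conv_lhs => rw [← Finset.univ_sum_single x]
    rw [map_sum]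
    apply Finset.sum_congr rfl
    intro j _
    have h1 : Pi.single j (x j) = x j • (Pi.single j (1 : R) : Fin s → R) := by
      rw [← Pi.single_smul, smul_eq_mul, mul_one]
    rw [h1, map_smul, smul_eq_mul]
  rw [hx]
  apply Finset.sum_congr rfl
  intro j _
  rw [LinearMap.smul_apply, smul_eq_mul, mul_comm]
  rfl

lemma duality {M : Type u} [AddCommGroup M] [Module R M] [Module.Finite R M]
    (hE : Module.Injective R E) (z : M ⊗[R] E)
    (hz : ∀ φ : M →ₗ[R] R, LinearMap.rTensor E φ z = 0) : z = 0 := by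
  obtain ⟨t, π, hπ⟩ := Module.Finite.exists_fin' R M
  obtain ⟨w, rfl⟩ := LinearMap.rTensor_surjective E hπ z
  set K := LinearMap.ker π with hK
  haveI : Module.Finite R K := ⟨(Submodule.fg_top K).mpr (IsNoetherian.noetherian K)⟩
  obtain ⟨s, ρ, hρ⟩ := Module.Finite.exists_fin' R K
  set A : (Fin s → R) →ₗ[R] (Fin t → R) := K.subtype ∘ₗ ρ with hA
  have hrange : LinearMap.range A = K := by
    rw [hA, LinearMap.range_comp, LinearMap.range_eq_top.mpr hρ, Submodule.map_top,
      Submodule.range_subtype]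
  have hπA : π ∘ₗ A = 0 := by
    apply LinearMap.ext
    intro x
    have hm : A x ∈ K := hrange ▸ LinearMap.mem_range_self A x
    exact hm
  let lam : ((Fin t → R) →ₗ[R] R) →ₗ[R] E :=
    { toFun := fun ψ => TensorProduct.lid R E (LinearMap.rTensor E ψ w)
      map_add' := fun ψ₁ ψ₂ => by
        show TensorProduct.lid R E (LinearMap.rTensor E (ψ₁ + ψ₂) w) = _
        rw [LinearMap.rTensor_add, LinearMap.add_apply, map_add]
      map_smul' := fun r ψ => by
        show TensorProduct.lid R E (LinearMap.rTensor E (r • ψ) w)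
          = r • TensorProduct.lid R E (LinearMap.rTensor E ψ w)
        rw [LinearMap.rTensor_smul, LinearMap.smul_apply, map_smul] }
  let B : ((Fin t → R) →ₗ[R] R) →ₗ[R] ((Fin s → R) →ₗ[R] R) := LinearMap.lcomp R R A
  have hUle : LinearMap.ker B ≤ LinearMap.ker lam := by
    intro ψ hψ
    have hψA : ψ ∘ₗ A = 0 := hψ
    have hKψ : K ≤ LinearMap.ker ψ := by
      rw [← hrange]
      rintro x ⟨y, rfl⟩
      show ψ (A y) = 0
      rw [← LinearMap.comp_apply, hψA]
      rfl
    let qe := LinearMap.quotKerEquivOfSurjective π hπ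
    let φ : M →ₗ[R] R := (K.liftQ ψ hKψ) ∘ₗ (qe.symm : M →ₗ[R] (Fin t → R) ⧸ K)
    have hfactor : ∀ x, φ (π x) = ψ x := by
      intro x
      have h1 : qe (Submodule.Quotient.mk x) = π x := rfl
      have h2 : qe.symm (π x) = Submodule.Quotient.mk x := by
        rw [← h1, LinearEquiv.symm_apply_apply]
      show (K.liftQ ψ hKψ) (qe.symm (π x)) = ψ x
      rw [h2, Submodule.liftQ_apply]
    have hcomp : φ ∘ₗ π = ψ := LinearMap.ext hfactor
    show lam ψ = 0
    have hw0 : LinearMap.rTensor E ψ w = 0 := by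
      rw [← hcomp, LinearMap.rTensor_comp_apply, hz φ]
    show TensorProduct.lid R E (LinearMap.rTensor E ψ w) = 0
    rw [hw0, map_zero]
  let mu1 : (((Fin t → R) →ₗ[R] R) ⧸ LinearMap.ker B) →ₗ[R] E :=
    (LinearMap.ker B).liftQ lam hUle
  let qeB := LinearMap.quotKerEquivRange B
  let mu : (LinearMap.range B) →ₗ[R] E :=
    mu1 ∘ₗ (qeB.symm : (LinearMap.range B) →ₗ[R] (((Fin t → R) →ₗ[R] R) ⧸ LinearMap.ker B))
  obtain ⟨muE, hmuE⟩ := hE.out (X := LinearMap.range B) (Y := (Fin s → R) →ₗ[R] R) (LinearMap.range B).subtype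
    (Submodule.injective_subtype _) mu
  have hmu : ∀ ψ : (Fin t → R) →ₗ[R] R, muE (B ψ) = lam ψ := by
    intro ψ
    have h2 : muE (B ψ) = mu ⟨B ψ, LinearMap.mem_range_self B ψ⟩ :=
      hmuE ⟨B ψ, LinearMap.mem_range_self B ψ⟩
    rw [h2]
    show mu1 (qeB.symm ⟨B ψ, LinearMap.mem_range_self B ψ⟩) = lam ψ
    have h3 : qeB (Submodule.Quotient.mk ψ) = ⟨B ψ, LinearMap.mem_range_self B ψ⟩ :=
      Subtype.ext (LinearMap.quotKerEquivRange_apply_mk (f := B) ψ)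
    rw [← h3, LinearEquiv.symm_apply_apply]
    exact Submodule.liftQ_apply _ lam ψ
  let v : (Fin s → R) ⊗[R] E :=
    ∑ j : Fin s, (Pi.single j (1 : R)) ⊗ₜ[R] (muE (projR s j))
  have hL : ∀ ψ : (Fin t → R) →ₗ[R] R,
      TensorProduct.lid R E (LinearMap.rTensor E ψ (LinearMap.rTensor E A v)) = lam ψ := by
    intro ψ
    rw [← LinearMap.rTensor_comp_apply]
    have hv : LinearMap.rTensor E (ψ ∘ₗ A) v
        = ∑ j : Fin s, ((ψ ∘ₗ A) (Pi.single j 1)) ⊗ₜ[R] (muE (projR s j)) := by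
      rw [map_sum]
      apply Finset.sum_congr rfl
      intro j _
      rw [LinearMap.rTensor_tmul]
    rw [hv, map_sum]
    have hterm : ∀ j : Fin s,
        TensorProduct.lid R E (((ψ ∘ₗ A) (Pi.single j 1)) ⊗ₜ[R] (muE (projR s j)))
          = muE (((ψ ∘ₗ A) (Pi.single j 1)) • projR s j) := by
      intro j
      rw [TensorProduct.lid_tmul, map_smul]
    rw [Finset.sum_congr rfl fun j _ => hterm j, ← map_sum]
    have hBψ : (∑ j : Fin s, ((ψ ∘ₗ A) (Pi.single j 1)) • projR s j) = B ψ :=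
      dual_expand (ψ ∘ₗ A)
    rw [hBψ, hmu]
  have hAv : LinearMap.rTensor E A v = w := by
    apply (piTensor t).injective
    funext i
    rw [pair_eq, pair_eq, hL (LinearMap.proj i)]
    rfl
  rw [← hAv, ← LinearMap.rTensor_comp_apply, hπA, LinearMap.rTensor_zero]
  rfl

end Duality

end SP
theorem splitting_prime_is_largest_special_ideal (R : Type u) [CommRing R] [IsNoetherianRing R] [IsLocalRing R]
    (p : ℕ) [Fact p.Prime] [CharP R p]
    (E : Type u) [AddCommGroup E] [Module R E]
    (hE : Module.Injective R E)
    (ι : (R ⧸ maximalIdeal R) →ₗ[R] E) (hι : Function.Injective ι)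
    (hess : ∀ N : Submodule R E, N ⊓ LinearMap.range ι = ⊥ → N = ⊥)
    (hFF : IsFFinite R p) (hFpure : IsFPure R p)
    (u : E) (hu : u ≠ 0)
    (hsocle : Submodule.torsionBySet R E (maximalIdeal R : Set R) = Submodule.span R {u}) :
    ∃ P : Ideal R,
      (P : Set R) = {r : R | ∃ N₀ : ℕ, ∀ n : ℕ, N₀ ≤ n → FrobBC.tmul R p n r u = 0} ∧
      P ≠ ⊤ ∧ IsPhiSpecial R p E P ∧
      ∀ 𝔟 : Ideal R, 𝔟 ≠ ⊤ → IsPhiSpecial R p E 𝔟 → 𝔟 ≤ P := by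
  -- the chain of annihilator ideals
  set γ : ℕ → PhiModule R p E := SP.gamma u with hγ
  set Nm : ℕ → Submodule R (PhiModule R p E) :=
    fun m => Submodule.span R (γ '' {n : ℕ | m ≤ n}) with hNm
  -- membership characterization
  have charA : ∀ (m : ℕ) (r : R),
      r ∈ (Nm m).annihilator ↔ ∀ n : ℕ, m ≤ n → FrobBC.tmul R p n r u = 0 := by
    intro m r
    rw [Submodule.mem_annihilator]
    constructor
    · intro h n hn
      have h1 : r • γ n = 0 := h (γ n) (Submodule.subset_span ⟨n, hn, rfl⟩)
      rw [hγ] at h1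
      rw [show SP.gamma u n = PhiModule.of R p E n (FrobBC.tmul R p n 1 u) from rfl,
        SP.of_smul, SP.smul_tmul_left, mul_one] at h1
      exact SP.of_injective n _ h1
    · intro h g hg
      refine Submodule.span_induction ?_ ?_ ?_ ?_ hg
      · rintro g ⟨n, hn, rfl⟩
        rw [hγ]
        rw [show SP.gamma u n = PhiModule.of R p E n (FrobBC.tmul R p n 1 u) from rfl,
          SP.of_smul, SP.smul_tmul_left, mul_one, h n hn]
        exact map_zero _
      · exact smul_zero r
      · intro x y _ _ hx hy
        rw [smul_add, hx, hy, add_zero]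
      · intro a x _ hx
        rw [smul_comm, hx, smul_zero]
  -- the chain is monotone, hence stabilizes
  have hmono : Monotone fun m => (Nm m).annihilator := by
    intro m m' hmm'
    apply Submodule.annihilator_mono
    apply Submodule.span_mono
    exact Set.image_mono fun n hn => le_trans hmm' hn
  obtain ⟨N₀, hstab⟩ :=
    monotone_stabilizes_iff_noetherian.mpr (inferInstance : IsNoetherian R R)
      ⟨fun m => (Nm m).annihilator, hmono⟩
  refine ⟨(Nm N₀).annihilator, ?_, ?_, ?_, ?_⟩
  · -- set description
    ext r
    simp only [SetLike.mem_coe, Set.mem_setOf_eq]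
    constructor
    · intro hr
      exact ⟨N₀, fun n hn => (charA N₀ r).1 hr n hn⟩
    · rintro ⟨M₀, hM⟩
      have h1 : r ∈ (Nm (max N₀ M₀)).annihilator :=
        (charA (max N₀ M₀) r).2 fun n hn => hM n (le_trans (le_max_right _ _) hn)
      have h2 : (Nm N₀).annihilator = (Nm (max N₀ M₀)).annihilator :=
        hstab (max N₀ M₀) (le_max_left _ _)
      rw [h2]
      exact h1
  · -- properness
    intro htop
    have h1 : (1 : R) ∈ (Nm N₀).annihilator := htop ▸ Submodule.mem_top
    have h2 := (charA N₀ 1).1 h1 N₀ le_rfl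
    exact SP.tmul_one_ne_zero hFpure u hu N₀ h2
  · -- Φ(E)-special
    refine ⟨Nm N₀, ?_, rfl⟩
    intro g hg
    refine Submodule.span_induction ?_ ?_ ?_ ?_ hg
    · rintro g ⟨n, hn, rfl⟩
      rw [hγ]
      rw [show SP.gamma u n = PhiModule.of R p E n (FrobBC.tmul R p n 1 u) from rfl,
        SP.shift_of, SP.sigma_tmul, one_pow]
      exact Submodule.subset_span ⟨n + 1, le_trans hn (Nat.le_succ n), rfl⟩
    · rw [map_zero]; exact Submodule.zero_mem _
    · intro x y _ _ hx hy
      rw [map_add]; exact Submodule.add_mem _ hx hy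
    · intro a x _ hx
      rw [SP.shift_smul]; exact Submodule.smul_mem _ _ hx
  · -- maximality
    rintro 𝔟 h𝔟top ⟨N', hstable, h𝔟ann⟩
    intro r hr
    refine (charA N₀ r).2 fun n hn => ?_
    by_contra hne
    haveI : Module.Finite R (FrobAlg R p n) := SP.frobAlg_finite hFF n
    have hexφ : ∃ φ : FrobAlg R p n →ₗ[R] R,
        LinearMap.rTensor E φ (FrobAlg.of R p n r ⊗ₜ[R] u) ≠ 0 := by
      by_contra hc
      push_neg at hc
      exact hne (SP.duality hE (FrobAlg.of R p n r ⊗ₜ[R] u) hc)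
    obtain ⟨φ, hφ0⟩ := hexφ
    set c : R := φ (FrobAlg.of R p n r) with hc
    have hcu : c • u ≠ 0 := by
      intro hzero
      apply hφ0
      rw [LinearMap.rTensor_tmul, ← hc]
      calc c ⊗ₜ[R] u = (c • (1 : R)) ⊗ₜ[R] u := by rw [smul_eq_mul, mul_one]
        _ = (1 : R) ⊗ₜ[R] (c • u) := TensorProduct.smul_tmul c 1 u
        _ = 0 := by rw [hzero, TensorProduct.tmul_zero]
    have hcm : c ∉ maximalIdeal R := by
      intro hmem
      apply hcu
      have husoc : u ∈ Submodule.torsionBySet R E (maximalIdeal R : Set R) := by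
        rw [hsocle]; exact Submodule.mem_span_singleton_self u
      exact (Submodule.mem_torsionBySet_iff _ u).1 husoc ⟨c, hmem⟩
    have hcunit : IsUnit c := by
      by_contra hnu
      exact hcm ((IsLocalRing.mem_maximalIdeal c).2 hnu)
    obtain ⟨cu, hcu_eq⟩ := hcunit
    set ψ : FrobAlg R p n →ₗ[R] R := ((cu⁻¹ : Rˣ) : R) • φ with hψ
    have hψr : ψ (FrobAlg.of R p n r) = 1 := by
      rw [hψ, LinearMap.smul_apply, ← hc, smul_eq_mul, ← hcu_eq, ← Units.val_mul,
        inv_mul_cancel, Units.val_one]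
    have hNbot : N' = ⊥ := by
      rw [Submodule.eq_bot_iff]
      intro g hg
      have hiter : ∀ j : ℕ, (PhiModule.shift R p E)^[j] g ∈ N' := by
        intro j
        induction j with
        | zero => exact hg
        | succ j ih => rw [Function.iterate_succ_apply']; exact hstable _ ih
      have hrann : r ∈ N'.annihilator := h𝔟ann ▸ hr
      have hrg : r • (PhiModule.shift R p E)^[n] g = 0 :=
        Submodule.mem_annihilator.1 hrann _ (hiter n)
      refine DirectSum.ext_component R fun k => ?_
      show SP.proj k g = SP.proj k (0 : PhiModule R p E)
      rw [map_zero]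
      calc SP.proj k g
          = SP.desc n ψ k (r • SP.tau k n (SP.proj k g)) :=
            (SP.desc_smul_tau n ψ r hψr k _).symm
        _ = SP.desc n ψ k (r • SP.proj (k + n) ((PhiModule.shift R p E)^[n] g)) := by
            rw [SP.proj_shift_iter]
        _ = SP.desc n ψ k (SP.proj (k + n) (r • (PhiModule.shift R p E)^[n] g)) := by
            rw [(SP.proj (k + n)).map_smul]
        _ = 0 := by rw [hrg, map_zero, map_zero]
    exact absurd (by rw [h𝔟ann, hNbot, Submodule.annihilator_bot]) h𝔟top
end
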